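/- A countable graph G has property FIN if and only if χ*(G) = ∞ and no set W ⊆ V(G) induces a subgraph with all infinite degrees. -/

import Mathlib

/-- There is an increasing path on `k` vertices in `G` under the vertex labeling `φ`. -/
def IncrPathOn {V : Type*} (G : SimpleGraph V) (φ : V → ℕ) (k : ℕ) : Prop :=
  ∃ w : ℕ → V, (∀ i j, i < k → j < k → w i = w j → i = j) ∧
    ∀ i, i + 1 < k → G.Adj (w i) (w (i + 1)) ∧ φ (w i) < φ (w (i + 1))

/-- There is an infinite increasing path in `G` under the vertex labeling `φ`. -/
def InfIncrPath {V α : Type*} [Preorder α] (G : SimpleGraph V) (φ : V → α) : Prop :=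
  ∃ w : ℕ → V, Function.Injective w ∧ ∀ i, G.Adj (w i) (w (i + 1)) ∧ φ (w i) < φ (w (i + 1))

/-- `V(G)` can be partitioned into `k` independent sets `V_1, …, V_k` such that every vertex
of `V_j` has only finitely many neighbours in `V_1 ∪ ⋯ ∪ V_{j-1}`. -/
def HasChiStarPartition {V : Type*} (G : SimpleGraph V) (k : ℕ) : Prop :=
  ∃ P : V → Fin k, (∀ u v, G.Adj u v → P u ≠ P v) ∧
    ∀ v, {u | G.Adj v u ∧ (P u : ℕ) < (P v : ℕ)}.Finite

/-- Property `FIN`: every bijective labeling of `V` by `ℕ` yields increasing paths on any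
number of vertices, but some bijective labeling yields no infinite increasing path. -/
def FIN {V : Type*} (G : SimpleGraph V) : Prop :=
  (∀ φ : V ≃ ℕ, ∀ k : ℕ, IncrPathOn G (fun v => φ v) k) ∧
  (∃ φ : V ≃ ℕ, ¬ InfIncrPath G (fun v => φ v))

set_option maxHeartbeats 1000000

noncomputable section

namespace Stmt8Aux
open Classical

universe u

variable {V : Type*}

/-- Basic data for building an enumeration of `V` from an increasing chain of finite lists. -/
structure GoodChain [Infinite V] (L : ℕ → List V) : Prop where
  pre : ∀ n, L n <+: L (n + 1)
  nd : ∀ n, (L n).Nodup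
  mem : ∀ v : V, ∃ n, v ∈ L n

variable [Infinite V] {L : ℕ → List V}

theorem GoodChain.pre2 (hL : GoodChain L) : ∀ {m n}, m ≤ n → L m <+: L n := by
  intro m n h
  induction n with
  | zero => simp_all
  | succ n ih =>
    rcases Nat.lt_or_ge m (n+1) with h' | h'
    · exact (ih (Nat.lt_succ_iff.mp h')).trans (hL.pre n)
    · have : m = n + 1 := le_antisymm h h'
      subst this; exact List.prefix_rfl

theorem GoodChain.getElem_stable (hL : GoodChain L) {m n k : ℕ} (hmn : m ≤ n)
    (h1 : k < (L m).length) (h2 : k < (L n).length) : (L m)[k] = (L n)[k] := by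
  exact ((hL.pre2 hmn).getElem h1).symm ▸ rfl


theorem GoodChain.exists_len (hL : GoodChain L) (k : ℕ) : ∃ n, k < (L n).length := by
  classical
  let g : ℕ ↪ V := Infinite.natEmbedding V
  have : ∀ i : ℕ, ∃ n, g i ∈ L n := fun i => hL.mem (g i)
  choose st hst using this
  let N : ℕ := (Finset.range (k+1)).sup st
  refine ⟨N, ?_⟩
  have hsub : ∀ i ∈ Finset.range (k+1), g i ∈ L N := by
    intro i hi
    have : st i ≤ N := Finset.le_sup hi
    exact (hL.pre2 this).mem (hst i)
  have hcard : (Finset.range (k+1)).card ≤ (L N).length := by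
    have := Finset.card_le_card_of_injOn (f := fun i => g i) (t := (L N).toFinset)
      (fun i hi => by simpa using hsub i hi) (fun a _ b _ h => g.injective h)
    simpa [List.toFinset_card_of_nodup (hL.nd N)] using this
  simpa using Nat.lt_of_lt_of_le (Nat.lt_succ_self k) (by simpa using hcard)

/-- The enumeration function extracted from the chain. -/
def enumF (hL : GoodChain L) (k : ℕ) : V :=
  (L (Nat.find (hL.exists_len k))).get ⟨k, Nat.find_spec (hL.exists_len k)⟩

theorem enumF_eq (hL : GoodChain L) {k n : ℕ} (h : k < (L n).length) :
    enumF hL k = (L n)[k] := by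
  unfold enumF
  rcases le_total (Nat.find (hL.exists_len k)) n with h' | h'
  · exact hL.getElem_stable h' _ h
  · exact (hL.getElem_stable h' h _).symm

theorem enumF_injective (hL : GoodChain L) : Function.Injective (enumF hL) := by
  intro a b hab
  by_contra hne
  wlog hab' : a < b generalizing a b
  · exact this hab.symm (Ne.symm hne) (by omega)
  · obtain ⟨na, hna⟩ := hL.exists_len a
    obtain ⟨nb, hnb⟩ := hL.exists_len b
    set N := max na nb with hN
    have ha : a < (L N).length := hna.trans_le (hL.pre2 (le_max_left _ _)).length_le
    have hb : b < (L N).length := hnb.trans_le (hL.pre2 (le_max_right _ _)).length_le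
    rw [enumF_eq hL ha, enumF_eq hL hb] at hab
    exact hne (by
      have := (hL.nd N).getElem_inj_iff.mp hab
      omega)

theorem enumF_surjective (hL : GoodChain L) : Function.Surjective (enumF hL) := by
  intro v
  obtain ⟨n, hn⟩ := hL.mem v
  obtain ⟨i, hi, hiv⟩ := List.mem_iff_getElem.mp hn
  exact ⟨i, by rw [enumF_eq hL hi]; exact hiv⟩

theorem enumF_bijective (hL : GoodChain L) : Function.Bijective (enumF hL) :=
  ⟨enumF_injective hL, enumF_surjective hL⟩

/-- Transfer of positional relations from the finite stages to the enumeration. -/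
theorem enumF_rel (hL : GoodChain L) (Q : V → V → Prop)
    (hQ : ∀ n i j (hi : i < (L n).length) (hj : j < (L n).length), i < j →
      Q ((L n)[i]) ((L n)[j])) :
    ∀ a b, a < b → Q (enumF hL a) (enumF hL b) := by
  intro a b hab
  obtain ⟨nb, hnb⟩ := hL.exists_len b
  have ha : a < (L nb).length := by omega
  rw [enumF_eq hL ha, enumF_eq hL hnb]
  exact hQ nb a b ha hnb hab

/-- The labeling equivalence. -/
def enumEquiv (hL : GoodChain L) : V ≃ ℕ :=
  (Equiv.ofBijective (enumF hL) (enumF_bijective hL)).symm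

theorem enumF_enumEquiv (hL : GoodChain L) (v : V) : enumF hL (enumEquiv hL v) = v := by
  exact (Equiv.ofBijective (enumF hL) (enumF_bijective hL)).apply_symm_apply v


variable {α β : Type*}

/-- List the elements of a finite set in order of (weakly) increasing key. -/
def ordList [LinearOrder β] (key : α → β) (s : Finset α) : List α :=
  if h : s.Nonempty then
    let m := Classical.choose (s.exists_min_image key h)
    m :: ordList key (s.erase m)
  else []
termination_by s.card
decreasing_by
  exact Finset.card_erase_lt_of_mem (Classical.choose_spec (s.exists_min_image key h)).1

theorem ordList_spec [LinearOrder β] (key : α → β) (s : Finset α) :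
    (∀ a, a ∈ ordList key s ↔ a ∈ s) ∧ (ordList key s).Nodup ∧
      (ordList key s).Pairwise (fun a b => key a ≤ key b) := by
  induction s using Finset.strongInduction with
  | _ s ih =>
    by_cases h : s.Nonempty
    · rw [ordList, dif_pos h]
      set m := Classical.choose (s.exists_min_image key h) with hm
      obtain ⟨hmem, hmin⟩ := Classical.choose_spec (s.exists_min_image key h)
      have hsub : s.erase m ⊂ s := Finset.erase_ssubset hmem
      obtain ⟨ih1, ih2, ih3⟩ := ih (s.erase m) hsub
      refine ⟨?_, ?_, ?_⟩
      · intro a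
        simp only [List.mem_cons, ih1, Finset.mem_erase]
        constructor
        · rintro (rfl | ⟨_, h2⟩)
          · exact hmem
          · exact h2
        · intro ha
          by_cases ham : a = m
          · exact Or.inl ham
          · exact Or.inr ⟨ham, ha⟩
      · refine List.nodup_cons.mpr ⟨?_, ih2⟩
        intro hcon
        exact (Finset.mem_erase.mp ((ih1 m).mp hcon)).1 rfl
      · refine List.pairwise_cons.mpr ⟨?_, ih3⟩
        intro b hb
        exact hmin b (Finset.mem_of_mem_erase ((ih1 b).mp hb))
    · rw [ordList, dif_neg h]
      refine ⟨?_, List.nodup_nil, List.Pairwise.nil⟩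
      intro a
      simp only [List.not_mem_nil, false_iff]
      intro ha
      exact h ⟨a, ha⟩

theorem ordList_length [LinearOrder β] (key : α → β) (s : Finset α) :
    (ordList key s).length = s.card := by
  have h1 := (ordList_spec key s).1
  have h2 := (ordList_spec key s).2.1
  rw [← List.toFinset_card_of_nodup h2]
  congr 1
  ext a
  simp [h1 a]

/-- Bounded-depth closure under a "lower set" operator. -/
def LclAux (Ls : α → Set α) : ℕ → α → Set α
  | 0, v => {v}
  | (n+1), v => {v} ∪ ⋃ u ∈ Ls v, LclAux Ls n u

theorem LclAux_self (Ls : α → Set α) (n : ℕ) (v : α) : v ∈ LclAux Ls n v := by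
  cases n <;> simp [LclAux]

theorem LclAux_finite (Ls : α → Set α) (hfin : ∀ v, (Ls v).Finite) (n : ℕ) (v : α) :
    (LclAux Ls n v).Finite := by
  induction n generalizing v with
  | zero => simp [LclAux]
  | succ n ih =>
    simp only [LclAux]
    exact (Set.finite_singleton v).union ((hfin v).biUnion (fun u _ => ih u))

theorem mem_LclAux_succ (Ls : α → Set α) (n : ℕ) (v u' : α) :
    u' ∈ LclAux Ls (n+1) v ↔ u' = v ∨ ∃ u ∈ Ls v, u' ∈ LclAux Ls n u := by
  simp only [LclAux, Set.mem_union, Set.mem_singleton_iff, Set.mem_iUnion, exists_prop]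

theorem LclAux_mono (Ls : α → Set α) : ∀ n (v : α), LclAux Ls n v ⊆ LclAux Ls (n+1) v := by
  intro n
  induction n with
  | zero => intro v u hu; simp only [LclAux, Set.mem_singleton_iff] at hu; subst hu
            exact LclAux_self Ls 1 u
  | succ n ih =>
    intro v u hu
    rw [mem_LclAux_succ] at hu ⊢
    rcases hu with rfl | ⟨w, hw, hu⟩
    · exact Or.inl rfl
    · exact Or.inr ⟨w, hw, ih w hu⟩

theorem LclAux_closed (Ls : α → Set α) (c : α → ℕ) (hc : ∀ v u, u ∈ Ls v → c u < c v) :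
    ∀ n v, c v ≤ n → ∀ u' ∈ LclAux Ls (n+1) v, Ls u' ⊆ LclAux Ls (n+1) v := by
  intro n
  induction n with
  | zero =>
    intro v hv u' hu'
    have hLs : Ls v = ∅ := by
      ext u
      simp only [Set.mem_empty_iff_false, iff_false]
      intro hu
      have := hc v u hu; omega
    rw [mem_LclAux_succ] at hu'
    rcases hu' with rfl | ⟨u, hu, _⟩
    · simp [hLs]
    · simp [hLs] at hu
  | succ n ih =>
    intro v hv u' hu'
    rw [mem_LclAux_succ] at hu'
    rcases hu' with rfl | ⟨u, hu, hu'mem⟩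
    · intro u hu
      rw [mem_LclAux_succ]
      exact Or.inr ⟨u, hu, LclAux_self Ls _ u⟩
    · have hcu : c u ≤ n := by have := hc v u hu; omega
      have hclosed := ih u hcu u' hu'mem
      intro w hw
      rw [mem_LclAux_succ]
      exact Or.inr ⟨u, hu, hclosed hw⟩


variable {V : Type*}

/-- Part C : an all-infinite-degree set forces infinite increasing paths for every labeling. -/
theorem partC (G : SimpleGraph V) (W : Set V) (hne : W.Nonempty)
    (hinf : ∀ v ∈ W, {u | u ∈ W ∧ G.Adj v u}.Infinite) (φ : V → ℕ)
    (hφ : Function.Injective φ) : InfIncrPath G φ := by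
  have step : ∀ v ∈ W, ∃ u, (u ∈ W ∧ G.Adj v u) ∧ φ v < φ u := by
    intro v hv
    have h1 : (φ '' {u | u ∈ W ∧ G.Adj v u}).Infinite :=
      Set.Infinite.image (Set.injOn_of_injective hφ) (hinf v hv)
    obtain ⟨b, hb, hlt⟩ := Set.Infinite.exists_gt h1 (φ v)
    obtain ⟨u, hu, rfl⟩ := hb
    exact ⟨u, hu, hlt⟩
  choose nxt hnxt1 hnxt2 using step
  let f : {v // v ∈ W} → {v // v ∈ W} := fun p => ⟨nxt p.1 p.2, (hnxt1 p.1 p.2).1⟩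
  let w0 : {v // v ∈ W} := ⟨hne.some, hne.some_mem⟩
  let ws : ℕ → {v // v ∈ W} := fun n => f^[n] w0
  have hws : ∀ n, ws (n+1) = f (ws n) := by
    intro n
    simp only [ws, Function.iterate_succ_apply']
  let w : ℕ → V := fun n => (ws n).1
  have hadj : ∀ i, G.Adj (w i) (w (i+1)) ∧ φ (w i) < φ (w (i+1)) := by
    intro i
    have h1 := hnxt1 (ws i).1 (ws i).2
    have h2 := hnxt2 (ws i).1 (ws i).2
    constructor
    · show G.Adj (w i) ((ws (i+1)).1)
      rw [hws i]; exact h1.2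
    · show φ (w i) < φ ((ws (i+1)).1)
      rw [hws i]; exact h2
  have hmono : StrictMono (fun n => φ (w n)) :=
    strictMono_nat_of_lt_succ (fun n => (hadj n).2)
  refine ⟨w, ?_, hadj⟩
  intro a b hab
  by_contra hne'
  rcases Ne.lt_or_gt hne' with h | h
  · exact absurd (congrArg φ hab) (hmono h).ne
  · exact absurd (congrArg φ hab.symm) (hmono h).ne

/-- Part B : failure of arbitrarily long increasing paths gives a finite χ* partition. -/
theorem partB [Infinite V] (G : SimpleGraph V) (φ : V ≃ ℕ) (k : ℕ)
    (hk : ¬ IncrPathOn G (fun v => φ v) k) : ∃ m, HasChiStarPartition G m := by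
  have hV : Nonempty V := inferInstance
  obtain ⟨v₀⟩ := hV
  -- k must be at least 2
  have hk2 : 2 ≤ k := by
    by_contra h
    apply hk
    refine ⟨fun _ => v₀, fun i j hi hj _ => by omega, fun i hi => by omega⟩
  set Ch : ℕ → V → Prop := fun m v =>
    ∃ w : ℕ → V, (∀ i j, i < m → j < m → w i = w j → i = j) ∧
      (∀ i, i + 1 < m → G.Adj (w i) (w (i + 1)) ∧ φ (w i) < φ (w (i + 1))) ∧
      w (m - 1) = v with hCh
  have chain_one : ∀ v, Ch 1 v := by
    intro v
    exact ⟨fun _ => v, fun i j hi hj _ => by omega, fun i hi => by omega, rfl⟩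
  have chain_mono : ∀ m (w : ℕ → V),
      (∀ i, i + 1 < m → G.Adj (w i) (w (i + 1)) ∧ φ (w i) < φ (w (i + 1))) →
      ∀ i j, i < j → j < m → φ (w i) < φ (w j) := by
    intro m w hw i j hij hjm
    induction j with
    | zero => omega
    | succ j ih =>
      rcases Nat.lt_or_ge i j with h | h
      · exact lt_trans (ih h (by omega)) (hw j (by omega)).2
      · have : i = j := by omega
        subst this
        exact (hw i (by omega)).2
  have chain_ext : ∀ m u v, 1 ≤ m → Ch m u → G.Adj u v → φ u < φ v → Ch (m+1) v := by
    intro m u v hm ⟨w, hwinj, hwadj, hwend⟩ huv hφuv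
    refine ⟨fun i => if i < m then w i else v, ?_, ?_, ?_⟩
    · intro i j hi hj hij
      have key : ∀ i, i < m → φ (w i) < φ v := by
        intro i him
        rcases Nat.lt_or_ge i (m-1) with h | h
        · calc φ (w i) < φ (w (m-1)) := chain_mono m w hwadj i (m-1) h (by omega)
            _ < φ v := by rw [hwend]; exact hφuv
        · have : i = m - 1 := by omega
          subst this; rw [hwend]; exact hφuv
      by_cases h1 : i < m <;> by_cases h2 : j < m <;> simp [h1, h2] at hij
      · exact hwinj i j h1 h2 hij
      · exact absurd (congrArg φ hij) (key i h1).ne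
      · exact absurd (congrArg φ hij.symm) (key j h2).ne
      · omega
    · intro i hi
      by_cases h1 : i + 1 < m
      · simp only [if_pos (by omega : i < m), if_pos h1]
        exact hwadj i h1
      · have him : i = m - 1 := by omega
        have : i < m := by omega
        simp only [if_pos this, if_neg (by omega : ¬ i + 1 < m)]
        subst him
        rw [hwend]
        exact ⟨huv, hφuv⟩
    · simp
  have hCh_dec : ∀ v, DecidablePred (Ch · v) := fun v m => Classical.dec _
  let H : V → ℕ := fun v => @Nat.findGreatest (Ch · v) (hCh_dec v) k
  have H_le : ∀ v, H v ≤ k := fun v => Nat.findGreatest_le k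
  have H_ge1 : ∀ v, 1 ≤ H v := fun v =>
    Nat.le_findGreatest (P := (Ch · v)) (by omega) (chain_one v)
  have H_spec : ∀ v, Ch (H v) v := by
    intro v
    exact Nat.findGreatest_spec (P := (Ch · v)) (m := 1) (by omega) (chain_one v)
  have H_ne_k : ∀ v, H v ≠ k := by
    intro v hvk
    obtain ⟨w, h1, h2, _⟩ := H_spec v
    rw [hvk] at h1 h2
    exact hk ⟨w, h1, h2⟩
  have H_lt : ∀ u v, G.Adj u v → φ u < φ v → H u < H v := by
    intro u v huv hφuv
    have h1 : Ch (H u + 1) v := chain_ext (H u) u v (H_ge1 u) (H_spec u) huv hφuv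
    have h2 : H u + 1 ≤ k := by
      have := H_le u; have := H_ne_k u; omega
    have h3 : H u + 1 ≤ H v := Nat.le_findGreatest (P := (Ch · v)) h2 h1
    omega
  refine ⟨k - 1, fun v => ⟨H v - 1, by have := H_le v; have := H_ne_k v; have := H_ge1 v; omega⟩,
    ?_, ?_⟩
  · intro u v huv
    have hne' : u ≠ v := G.ne_of_adj huv
    have : φ u ≠ φ v := fun h => hne' (φ.injective h)
    rcases Ne.lt_or_gt this with h | h
    · have := H_lt u v huv h
      have h1 := H_ge1 u
      simp only [ne_eq, Fin.mk.injEq]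
      omega
    · have := H_lt v u huv.symm h
      have h1 := H_ge1 v
      simp only [ne_eq, Fin.mk.injEq]
      omega
  · intro v
    have hsub : {u | G.Adj v u ∧ ((⟨H u - 1, by have := H_le u; have := H_ne_k u; have := H_ge1 u; omega⟩ : Fin (k-1)) : ℕ) < ((⟨H v - 1, by have := H_le v; have := H_ne_k v; have := H_ge1 v; omega⟩ : Fin (k-1)) : ℕ)} ⊆ (fun u => φ u) ⁻¹' (Set.Iio (φ v)) := by
      intro u hu
      obtain ⟨hadj, hlt⟩ := hu
      simp only [Set.mem_preimage, Set.mem_Iio]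
      by_contra h
      have h' : φ v < φ u ∨ φ v = φ u := by omega
      rcases h' with h' | h'
      · have := H_lt v u hadj h'
        simp at hlt
        have := H_ge1 v
        omega
      · exact absurd (φ.injective h'.symm) (G.ne_of_adj hadj.symm)
    exact Set.Finite.subset (Set.Finite.preimage (Set.injOn_of_injective φ.injective)
      (Set.finite_Iio _)) hsub


theorem partA {V : Type*} [Countable V] [Infinite V] (G : SimpleGraph V) (k : ℕ)
    (h : HasChiStarPartition G k) :
    ∃ (φ : V ≃ ℕ) (m : ℕ), ¬ IncrPathOn G (fun v => φ v) m := by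
  classical
  obtain ⟨P, hind, hfin⟩ := h
  obtain ⟨v₀⟩ : Nonempty V := inferInstance
  rcases Nat.eq_zero_or_pos k with rfl | hk
  · exact (P v₀).elim0
  obtain ⟨e'⟩ : Nonempty (V ≃ ℕ) := nonempty_equiv_of_countable
  set e : ℕ → V := fun n => e'.symm n with he
  have hesurj : Function.Surjective e := e'.symm.surjective
  set c : V → ℕ := fun v => (P v : ℕ) with hc
  set Ls : V → Set V := fun v => {u | G.Adj v u ∧ c u < c v} with hLs
  have hLs_fin : ∀ v, (Ls v).Finite := hfin
  have hLs_lt : ∀ v u, u ∈ Ls v → c u < c v := fun v u hu => hu.2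
  set Lcl : V → Set V := fun v => LclAux Ls (c v + 1) v with hLclDef
  have hLcl_fin : ∀ v, (Lcl v).Finite := fun v => LclAux_finite Ls hLs_fin _ v
  have hLcl_self : ∀ v, v ∈ Lcl v := fun v => LclAux_self Ls _ v
  have hLcl_closed : ∀ v, ∀ u' ∈ Lcl v, Ls u' ⊆ Lcl v :=
    fun v => LclAux_closed Ls c hLs_lt (c v) v le_rfl
  -- the stage lists
  set blk : List V → V → List V := fun l x =>
    ordList c (((hLcl_fin x).toFinset).filter (fun u => u ∉ l)) with hblk
  set L : ℕ → List V := fun n => Nat.rec ([] : List V) (fun n l => l ++ blk l (e n)) n with hLdef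
  have hLsucc : ∀ n, L (n+1) = L n ++ blk (L n) (e n) := fun n => rfl
  have hblk_mem : ∀ (l : List V) (x : V) (u : V),
      u ∈ blk l x ↔ (u ∈ Lcl x ∧ u ∉ l) := by
    intro l x u
    rw [hblk]
    rw [(ordList_spec c _).1 u]
    simp only [Finset.mem_filter, Set.Finite.mem_toFinset]
  have hblk_nd : ∀ (l : List V) (x : V), (blk l x).Nodup := fun l x => (ordList_spec c _).2.1
  have hblk_sorted : ∀ (l : List V) (x : V), (blk l x).Pairwise (fun a b => c a ≤ c b) :=
    fun l x => (ordList_spec c _).2.2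
  have hL : GoodChain L := by
    constructor
    · intro n
      rw [hLsucc]
      exact List.prefix_append _ _
    · intro n
      induction n with
      | zero => exact List.nodup_nil
      | succ n ih =>
        rw [hLsucc]
        rw [List.nodup_append]
        refine ⟨ih, hblk_nd _ _, ?_⟩
        intro a ha a' hb hab
        subst hab
        exact ((hblk_mem _ _ a).mp hb).2 ha
    · intro v
      obtain ⟨m, rfl⟩ := hesurj v
      refine ⟨m + 1, ?_⟩
      rw [hLsucc]
      by_cases hv : e m ∈ L m
      · exact List.mem_append_left _ hv
      · exact List.mem_append_right _ ((hblk_mem _ _ _).mpr ⟨hLcl_self _, hv⟩)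
  -- invariant J1, phrased on plain lists
  set Inv : List V → Prop := fun l => ∀ j (hj : j < l.length), ∀ u, G.Adj (l[j]) u →
      c u < c (l[j]) → ∃ i, ∃ (hi : i < l.length), i < j ∧ l[i] = u with hInv
  have step : ∀ (l : List V) (x : V), Inv l → Inv (l ++ blk l x) := by
    intro l x hl
    intro j hj u hadj hcu
    set b := blk l x with hb
    have hlen : (l ++ b).length = l.length + b.length := List.length_append
    rcases Nat.lt_or_ge j l.length with hjn | hjn
    · have hgj : (l ++ b)[j]'hj = l[j]'hjn := List.getElem_append_left hjn
      rw [hgj] at hadj hcu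
      obtain ⟨i, hi, hij, hiu⟩ := hl j hjn u hadj hcu
      refine ⟨i, by omega, hij, ?_⟩
      rw [List.getElem_append_left hi]
      exact hiu
    · have hjb : j - l.length < b.length := by omega
      have hgj : (l ++ b)[j]'hj = b[j - l.length]'hjb := List.getElem_append_right hjn
      rw [hgj] at hadj hcu
      set z := b[j - l.length]'hjb with hz
      have hzD : z ∈ Lcl x ∧ z ∉ l := (hblk_mem _ _ z).mp (by rw [hz]; exact List.getElem_mem hjb)
      have huLcl : u ∈ Lcl x := hLcl_closed x z hzD.1 ⟨hadj, hcu⟩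
      by_cases huL : u ∈ l
      · obtain ⟨i, hi, hiu⟩ := List.mem_iff_getElem.mp huL
        refine ⟨i, by omega, by omega, ?_⟩
        rw [List.getElem_append_left hi]
        exact hiu
      · have hub : u ∈ b := (hblk_mem _ _ u).mpr ⟨huLcl, huL⟩
        obtain ⟨ib, hib, hibu⟩ := List.mem_iff_getElem.mp hub
        have hiblt : ib < j - l.length := by
          by_contra hcon
          push_neg at hcon
          rcases Nat.eq_or_lt_of_le hcon with heq | hlt
          · apply absurd hcu
            have : z = u := by rw [hz, ← hibu]; congr 1
            rw [this]; omega
          · have := (List.pairwise_iff_getElem.mp (hblk_sorted l x)) _ _ hjb hib hlt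
            rw [hibu, ← hz] at this
            omega
        refine ⟨l.length + ib, by omega, by omega, ?_⟩
        rw [List.getElem_append_right (by omega)]
        have : l.length + ib - l.length = ib := by omega
        simp only [this]
        exact hibu
  have J1 : ∀ n, Inv (L n) := by
    intro n
    induction n with
    | zero =>
      intro j hj
      have : (L 0).length = 0 := rfl
      omega
    | succ n ih => exact step (L n) (e n) ih
  -- forward class-ascent
  have Qfwd : ∀ a b, a < b → (G.Adj (enumF hL a) (enumF hL b) →
      c (enumF hL a) < c (enumF hL b)) := by
    refine enumF_rel hL (fun u v => G.Adj u v → c u < c v) ?_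
    intro n i j hi hj hij hadj
    have hne : c ((L n)[i]) ≠ c ((L n)[j]) := by
      intro hceq
      exact hind _ _ hadj (Fin.val_injective hceq)
    rcases Nat.lt_or_ge (c ((L n)[i])) (c ((L n)[j])) with h | h
    · exact h
    · have hlt : c ((L n)[j]) < c ((L n)[i]) := by omega
      obtain ⟨i', hi', hii', heq⟩ := J1 n i hi ((L n)[j]) hadj hlt
      have : i' = j := by
        have := (hL.nd n).getElem_inj_iff.mp heq
        omega
      omega
  refine ⟨enumEquiv hL, k + 1, ?_⟩
  rintro ⟨w, hwinj, hwadj⟩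
  have hcw : ∀ i, i ≤ k → i ≤ c (w i) := by
    intro i
    induction i with
    | zero => omega
    | succ i ih =>
      intro hik
      have h1 := hwadj i (by omega)
      have h2 : (enumEquiv hL) (w i) < (enumEquiv hL) (w (i+1)) := h1.2
      have h3 := Qfwd _ _ h2
      rw [enumF_enumEquiv hL, enumF_enumEquiv hL] at h3
      have := h3 h1.1
      have := ih (by omega)
      omega
  have h1 := hcw k le_rfl
  have h2 : c (w k) < k := (P (w k)).isLt
  omega


section Rank
variable {V : Type u}
variable (G : SimpleGraph V)

/-- The derived sequence of vertex sets. -/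
def derS : Ordinal.{u} → Set V :=
  Ordinal.lt_wf.fix fun α ih => {v | ∀ β (hβ : β < α), {u | u ∈ ih β hβ ∧ G.Adj v u}.Infinite}

theorem derS_def (α : Ordinal.{u}) :
    derS G α = {v | ∀ β (_ : β < α), {u | u ∈ derS G β ∧ G.Adj v u}.Infinite} := by
  rw [derS, WellFounded.fix_eq]

theorem derS_antitone {α β : Ordinal.{u}} (h : α ≤ β) : derS G β ⊆ derS G α := by
  intro v hv
  rw [derS_def] at hv ⊢
  intro γ hγ
  exact hv γ (lt_of_lt_of_le hγ h)

theorem derS_vanish [Countable V]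
    (hW : ¬ ∃ W : Set V, W.Nonempty ∧ ∀ v ∈ W, {u | u ∈ W ∧ G.Adj v u}.Infinite) :
    ∃ b : Ordinal.{u}, derS G b = ∅ := by
  classical
  set Dset : Set Ordinal.{u} := {α | ((derS G α) \ (derS G (α+1))).Nonempty} with hDset
  have hchoice : ∀ α : Dset, ∃ v : V, v ∈ derS G α ∧ v ∉ derS G (α+1) := by
    rintro ⟨α, hα⟩
    obtain ⟨v, hv⟩ := hα
    exact ⟨v, hv.1, hv.2⟩
  choose f hf1 hf2 using hchoice
  have hkey : ∀ (p q : Dset), (p : Ordinal.{u}) < (q : Ordinal.{u}) → f p ≠ f q := by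
    rintro p q hpq hfab
    have h1 : f q ∈ derS G (q : Ordinal.{u}) := hf1 _
    have h2 : derS G (q : Ordinal.{u}) ⊆ derS G ((p : Ordinal.{u}) + 1) :=
      derS_antitone G (Order.add_one_le_iff.mpr hpq)
    rw [← hfab] at h1
    exact hf2 p (h2 h1)
  have hfinj : Function.Injective f := by
    intro p q hfab
    by_contra hne
    have hne' : (p : Ordinal.{u}) ≠ (q : Ordinal.{u}) := fun h => hne (Subtype.ext h)
    rcases lt_or_gt_of_ne hne' with h | h
    · exact hkey p q h hfab
    · exact hkey q p h hfab.symm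
  have hsmall : Small.{u} Dset := by
    have : Countable Dset := Function.Injective.countable hfinj
    exact Countable.toSmall _
  have hbdd : BddAbove Dset := Ordinal.bddAbove_of_small
  obtain ⟨c, hc⟩ := hbdd
  set b := c + 1 with hb
  have hbD : b ∉ Dset := by
    intro hbmem
    have h1 : b ≤ c := hc hbmem
    have h2 : c < b := by rw [hb]; exact lt_add_one c
    exact absurd h1 (not_le.mpr h2)
  have heq : derS G b = derS G (b+1) := by
    apply Set.Subset.antisymm
    · intro v hv
      by_contra hcon
      exact hbD ⟨v, hv, hcon⟩
    · exact derS_antitone G (le_of_lt (lt_add_one b))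
  by_contra hcon
  push_neg at hcon
  apply hW
  refine ⟨derS G b, hcon b, ?_⟩
  intro v hv
  rw [heq, derS_def] at hv
  exact hv b (by simp)

variable [Countable V]

/-- the rank of a vertex -/
def rnk (v : V) : Ordinal.{u} := sInf {β | {u | u ∈ derS G β ∧ G.Adj v u}.Finite}


theorem rnk_set_nonempty
    (hW : ¬ ∃ W : Set V, W.Nonempty ∧ ∀ v ∈ W, {u | u ∈ W ∧ G.Adj v u}.Infinite) (v : V) :
    {β | {u | u ∈ derS G β ∧ G.Adj v u}.Finite}.Nonempty := by
  obtain ⟨b, hb⟩ := derS_vanish G hW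
  refine ⟨b, ?_⟩
  have : {u | u ∈ derS G b ∧ G.Adj v u} = ∅ := by
    rw [hb]; simp
  simp only [Set.mem_setOf_eq, this]
  exact Set.finite_empty

theorem rnk_spec (hW : ¬ ∃ W : Set V, W.Nonempty ∧ ∀ v ∈ W, {u | u ∈ W ∧ G.Adj v u}.Infinite)
    (v : V) : {u | u ∈ derS G (rnk G v) ∧ G.Adj v u}.Finite :=
  csInf_mem (rnk_set_nonempty G hW v)

theorem mem_derS_rnk (v : V) : v ∈ derS G (rnk G v) := by
  rw [derS_def]
  intro β hβ
  have hmem : β ∉ {β | {u | u ∈ derS G β ∧ G.Adj v u}.Finite} := fun hmem =>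
    absurd (csInf_le (OrderBot.bddBelow _) hmem) (not_le.mpr hβ)
  exact hmem

theorem upSet_finite
    (hW : ¬ ∃ W : Set V, W.Nonempty ∧ ∀ v ∈ W, {u | u ∈ W ∧ G.Adj v u}.Infinite)
    (v : V) : {u | G.Adj v u ∧ rnk G v ≤ rnk G u}.Finite := by
  apply (rnk_spec G hW v).subset
  rintro u ⟨hadj, hle⟩
  exact ⟨derS_antitone G hle (mem_derS_rnk G u), hadj⟩


end Rank

variable {V : Type u}
section Prec
variable (G : SimpleGraph V) (r : V → Ordinal.{u}) (ι : V → ℕ)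

/-- the auxiliary well-founded order -/
def prec (u v : V) : Prop := r u < r v ∨ (r u = r v ∧ ι u < ι v)

theorem prec_wf : WellFounded (prec r ι) := by
  have h : WellFounded (InvImage (Prod.Lex ((· < ·) : Ordinal.{u} → Ordinal.{u} → Prop)
      ((· < ·) : ℕ → ℕ → Prop)) (fun v => (r v, ι v))) :=
    InvImage.wf _ ((Ordinal.lt_wf).prod_lex (Nat.lt_wfRel.wf))
  apply Subrelation.wf _ h
  rintro u v (h1 | ⟨h1, h2⟩)
  · exact Prod.Lex.left _ _ h1
  · show Prod.Lex _ _ (r u, ι u) (r v, ι v)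
    rw [h1]
    exact Prod.Lex.right _ h2

theorem prec_comparable (hι : Function.Injective ι) {u v : V} (huv : u ≠ v) :
    prec r ι u v ∨ prec r ι v u := by
  rcases lt_trichotomy (r u) (r v) with h | h | h
  · exact Or.inl (Or.inl h)
  · rcases lt_trichotomy (ι u) (ι v) with h2 | h2 | h2
    · exact Or.inl (Or.inr ⟨h, h2⟩)
    · exact absurd (hι h2) huv
    · exact Or.inr (Or.inr ⟨h.symm, h2⟩)
  · exact Or.inr (Or.inl h)

theorem prec_rnk_le {u v : V} (h : prec r ι u v) : r u ≤ r v := by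
  rcases h with h | ⟨h, _⟩
  · exact le_of_lt h
  · exact le_of_eq h

/-- The potential function. -/
def Phi : V → Ordinal.{u} :=
  (prec_wf r ι).fix fun v ih => ⨆ z : {z // G.Adj v z ∧ prec r ι z v}, (ih z z.2.2 + 5)

theorem Phi_def (v : V) :
    Phi G r ι v = ⨆ z : {z // G.Adj v z ∧ prec r ι z v}, (Phi G r ι z + 5) := by
  rw [Phi, WellFounded.fix_eq]

theorem Phi_gap {v z : V} (hadj : G.Adj v z) (hz : prec r ι z v) :
    Phi G r ι z + 5 ≤ Phi G r ι v := by
  rw [Phi_def G r ι v]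
  exact Ordinal.le_iSup (fun z : {z // G.Adj v z ∧ prec r ι z v} => (Phi G r ι z + 5)) ⟨z, hadj, hz⟩

end Prec

section Stage
variable {V : Type u} [Infinite V]

local notation "Ω" => Ordinal.omega0

variable (adj : V → V → Prop) (pc : V → V → Prop) (F : V → Ordinal.{u})

/-- The join relation at state `(l, h)`. -/
def Jrel (l : List V) (h : V → Ordinal.{u}) (z z' : V) : Prop :=
  adj z z' ∧ pc z z' ∧ z' ∉ l ∧ ∃ d ∈ l, adj z d ∧ h d < Ω ^ (F z' + 5)

/-- Iterated join-children. -/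
def iterJ (l : List V) (h : V → Ordinal.{u}) : ℕ → V → Set V
  | 0, z => {z}
  | (n+1), z => ⋃ z' ∈ {z' | Jrel adj pc F l h z z'}, iterJ l h n z'

variable {l : List V} {h : V → Ordinal.{u}}

theorem Jrel_sub (z : V) : {z' | Jrel adj pc F l h z z'} ⊆ {u | adj z u ∧ pc z u} :=
  fun z' hz' => ⟨hz'.1, hz'.2.1⟩

theorem iterJ_finite (hUfin : ∀ v, {u | adj v u ∧ pc v u}.Finite) (n : ℕ) (z : V) :
    (iterJ adj pc F l h n z).Finite := by
  induction n generalizing z with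
  | zero => simp [iterJ]
  | succ n ih =>
    refine Set.Finite.biUnion ((hUfin z).subset (Jrel_sub adj pc F z)) (fun z' _ => ih z')

theorem iterJ_mem_succ (n : ℕ) (z y : V) :
    y ∈ iterJ adj pc F l h (n+1) z ↔ ∃ z', Jrel adj pc F l h z z' ∧ y ∈ iterJ adj pc F l h n z' := by
  simp [iterJ]

theorem iterJ_ne_step (n : ℕ) (z : V) (hne : (iterJ adj pc F l h (n+1) z).Nonempty) :
    (iterJ adj pc F l h n z).Nonempty := by
  induction n generalizing z with
  | zero => exact ⟨z, rfl⟩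
  | succ n ih =>
    obtain ⟨y, hy⟩ := hne
    rw [iterJ_mem_succ] at hy
    obtain ⟨z', hz', hy⟩ := hy
    obtain ⟨y', hy'⟩ := ih z' ⟨y, hy⟩
    exact ⟨y', (iterJ_mem_succ adj pc F n z y').mpr ⟨z', hz', hy'⟩⟩

theorem iterJ_ne_mono {m n : ℕ} (hmn : m ≤ n) (z : V)
    (hne : (iterJ adj pc F l h n z).Nonempty) : (iterJ adj pc F l h m z).Nonempty := by
  induction n with
  | zero => rwa [Nat.le_zero.mp hmn]
  | succ n ih =>
    rcases Nat.lt_or_ge m (n+1) with h' | h'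
    · exact ih (by omega) (iterJ_ne_step adj pc F n z hne)
    · have : m = n + 1 := by omega
      rwa [this]

/-- "every length of chain from z is realized" -/
def grows (l : List V) (h : V → Ordinal.{u}) (z : V) : Prop :=
  ∀ n, (iterJ adj pc F l h n z).Nonempty

theorem grows_step (hUfin : ∀ v, {u | adj v u ∧ pc v u}.Finite) (z : V)
    (hz : grows adj pc F l h z) :
    ∃ z', Jrel adj pc F l h z z' ∧ grows adj pc F l h z' := by
  classical
  have hwit : ∀ n, ∃ z', Jrel adj pc F l h z z' ∧ (iterJ adj pc F l h n z').Nonempty := by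
    intro n
    obtain ⟨y, hy⟩ := hz (n+1)
    rw [iterJ_mem_succ] at hy
    obtain ⟨z', h1, h2⟩ := hy
    exact ⟨z', h1, ⟨y, h2⟩⟩
  choose g hg1 hg2 using hwit
  have hfin : (Set.range g).Finite :=
    Set.Finite.subset (hUfin z)
      (by rintro _ ⟨n, rfl⟩; exact ⟨(hg1 n).1, (hg1 n).2.1⟩)
  have : ∃ c ∈ Set.range g, {n | g n = c}.Infinite := by
    by_contra hcon
    push_neg at hcon
    have : (Set.univ : Set ℕ).Finite := by
      have hcover : (Set.univ : Set ℕ) ⊆ ⋃ c ∈ Set.range g, {n | g n = c} := by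
        intro n _
        simp only [Set.mem_iUnion]
        exact ⟨g n, ⟨n, rfl⟩, rfl⟩
      exact Set.Finite.subset (Set.Finite.biUnion hfin (fun c hc => by
        have := hcon c hc
        exact this)) hcover
    exact Set.infinite_univ this
  obtain ⟨c, hcr, hcinf⟩ := this
  obtain ⟨n₀, hn₀⟩ := hcr
  refine ⟨c, hn₀ ▸ hg1 n₀, ?_⟩
  intro n
  obtain ⟨m, hm, hnm⟩ := hcinf.exists_gt n
  have : (iterJ adj pc F l h m c).Nonempty := hm ▸ hg2 m
  exact iterJ_ne_mono adj pc F (le_of_lt hnm) c this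

/-- The cornerstone: under the budget invariant the join-iteration dies out. -/
theorem not_grows (hUfin : ∀ v, {u | adj v u ∧ pc v u}.Finite)
    (hsym : ∀ u v, adj u v → adj v u)
    (hgap : ∀ v z, adj v z → pc z v → F z + 5 ≤ F v)
    (hI2 : ∀ d ∈ l, ∀ y, y ∉ l → adj d y → Ω ^ (F y + 4) ≤ h d)
    (x : V) : ¬ grows adj pc F l h x := by
  intro hx
  -- build the infinite join-chain
  let T := {z : V // grows adj pc F l h z}
  have hstep : ∀ p : T, ∃ q : T, Jrel adj pc F l h p.1 q.1 := by
    rintro ⟨z, hz⟩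
    obtain ⟨z', h1, h2⟩ := grows_step adj pc F hUfin z hz
    exact ⟨⟨z', h2⟩, h1⟩
  choose f hf using hstep
  let ws : ℕ → T := fun n => f^[n] ⟨x, hx⟩
  have hws : ∀ n, ws (n+1) = f (ws n) := fun n => Function.iterate_succ_apply' f n _
  let sq : ℕ → V := fun n => (ws n).1
  have hJ : ∀ n, Jrel adj pc F l h (sq n) (sq (n+1)) := by
    intro n
    have := hf (ws n)
    show Jrel adj pc F l h (ws n).1 (ws (n+1)).1
    rw [hws n]
    exact this
  have hnotin : ∀ n, sq (n+1) ∉ l := fun n => (hJ n).2.2.1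
  have hmono5 : ∀ n, F (sq n) + 5 ≤ F (sq (n+1)) := by
    intro n
    exact hgap (sq (n+1)) (sq n) (hsym _ _ (hJ n).1) (hJ n).2.1
  have hmono : ∀ a b, a ≤ b → F (sq a) ≤ F (sq b) := by
    intro a b hab
    induction b with
    | zero => rw [Nat.le_zero.mp hab]
    | succ b ih =>
      rcases Nat.lt_or_ge a (b+1) with h' | h'
      · exact le_trans (ih (by omega)) (le_trans (le_self_add) (hmono5 b))
      · have : a = b + 1 := by omega
        rw [this]
  -- the witnesses d
  have hwit : ∀ n, ∃ d ∈ l, adj (sq n) d ∧ h d < Ω ^ (F (sq (n+1)) + 5) := fun n => (hJ n).2.2.2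
  choose d hd1 hd2 hd3 using hwit
  have hlfin : {y : V | y ∈ l}.Finite := l.finite_toSet
  have : ∃ c ∈ {y : V | y ∈ l}, {n | d n = c}.Infinite := by
    by_contra hcon
    push_neg at hcon
    have : (Set.univ : Set ℕ).Finite := by
      have hcover : (Set.univ : Set ℕ) ⊆ ⋃ c ∈ {y : V | y ∈ l}, {n | d n = c} := by
        intro n _
        simp only [Set.mem_iUnion]
        exact ⟨d n, hd1 n, rfl⟩
      exact Set.Finite.subset (Set.Finite.biUnion hlfin (fun c hc => by
        have := hcon c hc
        exact this)) hcover
    exact Set.infinite_univ this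
  obtain ⟨c, hcl, hcinf⟩ := this
  obtain ⟨n, hn⟩ := hcinf.nonempty
  obtain ⟨m, hm, hnm⟩ := hcinf.exists_gt (n+1)
  -- the two estimates
  have h1 : h c < Ω ^ (F (sq (n+1)) + 5) := hn ▸ hd3 n
  have h2 : Ω ^ (F (sq m) + 4) ≤ h c := by
    have hmge : 1 ≤ m := by omega
    have : adj c (sq m) := by
      have := hd2 m
      rw [hm] at this
      exact hsym _ _ this
    have hmnot : sq m ∉ l := by
      obtain ⟨m', rfl⟩ : ∃ m', m = m' + 1 := ⟨m - 1, by omega⟩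
      exact hnotin m'
    exact hI2 c hcl (sq m) hmnot this
  have h3 : F (sq (n+1)) + 5 ≤ F (sq m) := by
    calc F (sq (n+1)) + 5 ≤ F (sq (n+2)) := hmono5 (n+1)
      _ ≤ F (sq m) := hmono (n+2) m (by omega)
  have h4 : Ω ^ (F (sq (n+1)) + 5) ≤ Ω ^ (F (sq m) + 4) :=
    (Ordinal.opow_le_opow_iff_right Ordinal.one_lt_omega0).mpr
      (le_trans h3 (le_self_add))
  exact absurd (lt_of_lt_of_le h1 (le_trans h4 h2)) (lt_irrefl _)



/-- the set placed in one stage (when the seed is new) -/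
def Dset (l : List V) (h : V → Ordinal.{u}) (x : V) : Set V := ⋃ n, iterJ adj pc F l h n x

theorem mem_Dset_self (x : V) : x ∈ Dset adj pc F l h x :=
  Set.mem_iUnion.mpr ⟨0, rfl⟩

theorem iterJ_not_mem_l : ∀ (n : ℕ) (z : V), z ∉ l → ∀ y ∈ iterJ adj pc F l h n z, y ∉ l := by
  intro n
  induction n with
  | zero => intro z hz y hy; rw [iterJ] at hy; rw [Set.mem_singleton_iff] at hy; rwa [hy]
  | succ n ih =>
    intro z hz y hy
    rw [iterJ_mem_succ] at hy
    obtain ⟨z', hz', hy⟩ := hy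
    exact ih z' hz'.2.2.1 y hy

theorem Dset_not_mem_l (x : V) (hx : x ∉ l) : ∀ z ∈ Dset adj pc F l h x, z ∉ l := by
  intro z hz
  obtain ⟨n, hn⟩ := Set.mem_iUnion.mp hz
  exact iterJ_not_mem_l adj pc F n x hx z hn

theorem iterJ_step_closed : ∀ (k : ℕ) (z₀ z z' : V), z ∈ iterJ adj pc F l h k z₀ →
    Jrel adj pc F l h z z' → z' ∈ iterJ adj pc F l h (k+1) z₀ := by
  intro k
  induction k with
  | zero =>
    intro z₀ z z' hz hJ
    rw [iterJ] at hz; rw [Set.mem_singleton_iff] at hz; subst hz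
    rw [iterJ_mem_succ]
    exact ⟨z', hJ, rfl⟩
  | succ k ih =>
    intro z₀ z z' hz hJ
    rw [iterJ_mem_succ] at hz
    obtain ⟨c, hc, hz⟩ := hz
    rw [iterJ_mem_succ]
    exact ⟨c, hc, ih c z z' hz hJ⟩

theorem Dset_closed {x z z' : V} (hz : z ∈ Dset adj pc F l h x)
    (hJ : Jrel adj pc F l h z z') : z' ∈ Dset adj pc F l h x := by
  obtain ⟨k, hk⟩ := Set.mem_iUnion.mp hz
  exact Set.mem_iUnion.mpr ⟨k+1, iterJ_step_closed adj pc F k x z z' hk hJ⟩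

theorem Dset_finite (hUfin : ∀ v, {u | adj v u ∧ pc v u}.Finite)
    (hsym : ∀ u v, adj u v → adj v u)
    (hgap : ∀ v z, adj v z → pc z v → F z + 5 ≤ F v)
    (hI2 : ∀ d ∈ l, ∀ y, y ∉ l → adj d y → Ω ^ (F y + 4) ≤ h d)
    (x : V) : (Dset adj pc F l h x).Finite := by
  have hng := not_grows adj pc F hUfin hsym hgap hI2 x
  rw [grows] at hng
  push_neg at hng
  obtain ⟨n₀, hn₀⟩ := hng
  have hsub : Dset adj pc F l h x ⊆ ⋃ (k : Fin n₀), iterJ adj pc F l h k x := by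
    intro y hy
    obtain ⟨k, hk⟩ := Set.mem_iUnion.mp hy
    by_cases hkn : k < n₀
    · exact Set.mem_iUnion.mpr ⟨⟨k, hkn⟩, hk⟩
    · have hne := iterJ_ne_mono adj pc F (show n₀ ≤ k by omega) x ⟨y, hk⟩
      rw [hn₀] at hne
      exact absurd hne (by simp)
  exact Set.Finite.subset
    (Set.finite_iUnion (fun k : Fin n₀ => iterJ_finite adj pc F hUfin k x)) hsub

theorem Dset_cut {x z z' : V} (hz : z ∈ Dset adj pc F l h x) (h1 : adj z z') (h2 : pc z z')
    (h3 : z' ∉ l) (h4 : z' ∉ Dset adj pc F l h x) :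
    ∀ d ∈ l, adj z d → Ω ^ (F z' + 5) ≤ h d := by
  intro d hd hadj
  by_contra hcon
  push_neg at hcon
  exact h4 (Dset_closed adj pc F hz ⟨h1, h2, h3, d, hd, hadj, hcon⟩)

/-- the exponent used for newly placed vertices -/
def Nv (l : List V) (h : V → Ordinal.{u}) (x z : V) : Ordinal.{u} :=
  ⨆ y : {y // adj z y ∧ y ∉ l ∧ y ∉ Dset adj pc F l h x}, (F y + 3)

theorem Nv_ge {x z y : V} (h1 : adj z y) (h2 : y ∉ l) (h3 : y ∉ Dset adj pc F l h x) :
    F y + 3 ≤ Nv adj pc F l h x z :=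
  Ordinal.le_iSup (fun y : {y // adj z y ∧ y ∉ l ∧ y ∉ Dset adj pc F l h x} => F y.1 + 3)
    ⟨y, h1, h2, h3⟩

theorem Nv_bound (hUfin : ∀ v, {u | adj v u ∧ pc v u}.Finite)
    (hsym : ∀ u v, adj u v → adj v u)
    (hcomp : ∀ u v, adj u v → pc u v ∨ pc v u)
    (hgap : ∀ v z, adj v z → pc z v → F z + 5 ≤ F v)
    (hI2 : ∀ d ∈ l, ∀ y, y ∉ l → adj d y → Ω ^ (F y + 4) ≤ h d)
    {x : V} (hx : x ∉ l) {z : V} (hz : z ∈ Dset adj pc F l h x) :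
    ∀ d ∈ l, adj z d → Ω ^ (Nv adj pc F l h x z + 2) ≤ h d := by
  intro d hd hadj
  set A := F z + 2 with hA
  have hFzfin : {y | adj z y ∧ pc z y ∧ y ∉ l ∧ y ∉ Dset adj pc F l h x}.Finite :=
    (hUfin z).subset (fun y hy => ⟨hy.1, hy.2.1⟩)
  set Fs : Ordinal.{u} := hFzfin.toFinset.sup (fun y => F y + 3) with hFs
  have claim1 : Nv adj pc F l h x z ≤ max A Fs := by
    apply Ordinal.iSup_le
    rintro ⟨y, hy1, hy2, hy3⟩
    have hne : z ≠ y := by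
      rintro rfl
      exact hy3 hz
    rcases hcomp z y hy1 with hpc | hpc
    · refine le_trans ?_ (le_max_right A Fs)
      exact Finset.le_sup (f := fun y => F y + 3) (hFzfin.mem_toFinset.mpr ⟨hy1, hpc, hy2, hy3⟩)
    · refine le_trans ?_ (le_max_left A Fs)
      have h5 : F y + 5 ≤ F z := hgap z y hy1 hpc
      calc F y + 3 ≤ F y + 5 :=
            add_le_add_right (by exact_mod_cast (by norm_num : (3:ℕ) ≤ 5)) _
        _ ≤ F z := h5
        _ ≤ F z + 2 := le_self_add
  rcases le_or_gt (Nv adj pc F l h x z) A with hcase | hcase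
  · have hexp : Nv adj pc F l h x z + 2 ≤ F z + 4 := by
      calc Nv adj pc F l h x z + 2 ≤ (F z + 2) + 2 := add_le_add_left hcase 2
        _ = F z + 4 := by rw [add_assoc]; norm_num
    calc Ω ^ (Nv adj pc F l h x z + 2) ≤ Ω ^ (F z + 4) :=
          (Ordinal.opow_le_opow_iff_right Ordinal.one_lt_omega0).mpr hexp
      _ ≤ h d := hI2 d hd z (Dset_not_mem_l adj pc F x hx z hz) (hsym _ _ hadj)
  · have hle2 : Nv adj pc F l h x z ≤ Fs := by
      rcases le_or_gt (Nv adj pc F l h x z) Fs with h' | h'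
      · exact h'
      · exact absurd claim1 (not_le.mpr (max_lt hcase h'))
    have hle1 : Fs ≤ Nv adj pc F l h x z := by
      apply Finset.sup_le
      intro y hy
      rw [Set.Finite.mem_toFinset] at hy
      exact Nv_ge adj pc F hy.1 hy.2.2.1 hy.2.2.2
    have hne : hFzfin.toFinset.Nonempty := by
      by_contra hcon
      rw [Finset.not_nonempty_iff_eq_empty] at hcon
      rw [hFs, hcon] at hle2
      simp only [Finset.sup_empty] at hle2
      have : Nv adj pc F l h x z = 0 := le_bot_iff.mp hle2
      rw [this] at hcase
      exact not_lt_zero hcase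
    obtain ⟨y', hy'mem, hy'⟩ := Finset.exists_mem_eq_sup _ hne (fun y => F y + 3)
    rw [Set.Finite.mem_toFinset] at hy'mem
    have hNval : Nv adj pc F l h x z = F y' + 3 := le_antisymm (hle2.trans (le_of_eq hy'))
      (hy' ▸ hle1)
    have hexp : Nv adj pc F l h x z + 2 = F y' + 5 := by
      rw [hNval, add_assoc]; norm_num
    rw [hexp]
    exact Dset_cut adj pc F hz hy'mem.1 hy'mem.2.1 hy'mem.2.2.1 hy'mem.2.2.2 d hd hadj



-- appended to m8 within section Stage


def blkD (l : List V) (h : V → Ordinal.{u}) (x : V)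
    (hfin : (Dset adj pc F l h x).Finite) : List V :=
  ordList (fun z => OrderDual.toDual (Nv adj pc F l h x z)) hfin.toFinset

theorem blkD_mem {l : List V} {h : V → Ordinal.{u}} {x : V}
    (hfin : (Dset adj pc F l h x).Finite) (v : V) :
    v ∈ blkD adj pc F l h x hfin ↔ v ∈ Dset adj pc F l h x := by
  rw [blkD, (ordList_spec _ _).1 v, Set.Finite.mem_toFinset]

theorem blkD_nd {l : List V} {h : V → Ordinal.{u}} {x : V}
    (hfin : (Dset adj pc F l h x).Finite) : (blkD adj pc F l h x hfin).Nodup :=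
  (ordList_spec _ _).2.1

theorem blkD_sorted {l : List V} {h : V → Ordinal.{u}} {x : V}
    (hfin : (Dset adj pc F l h x).Finite) :
    (blkD adj pc F l h x hfin).Pairwise
      (fun a b => Nv adj pc F l h x b ≤ Nv adj pc F l h x a) := by
  have := (ordList_spec (fun z => OrderDual.toDual (Nv adj pc F l h x z)) hfin.toFinset).2.2
  exact this.imp (fun {a b} hab => OrderDual.toDual_le_toDual.mp hab)

def hD (l : List V) (h : V → Ordinal.{u}) (x : V)
    (hfin : (Dset adj pc F l h x).Finite) : V → Ordinal.{u} := fun v =>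
  if v ∈ Dset adj pc F l h x then
    Ω ^ (Nv adj pc F l h x v + 1) *
      (((blkD adj pc F l h x hfin).length - (blkD adj pc F l h x hfin).idxOf v : ℕ) : Ordinal)
  else h v

theorem hD_old {l : List V} {h : V → Ordinal.{u}} {x : V}
    (hfin : (Dset adj pc F l h x).Finite) (hx : x ∉ l) {v : V} (hv : v ∈ l) :
    hD adj pc F l h x hfin v = h v := by
  rw [hD, if_neg]
  intro hcon
  exact Dset_not_mem_l adj pc F x hx v hcon hv

theorem hD_pos {l : List V} {h : V → Ordinal.{u}} {x : V}
    (hfin : (Dset adj pc F l h x).Finite) {i : ℕ}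
    (hi : i < (blkD adj pc F l h x hfin).length) :
    hD adj pc F l h x hfin ((blkD adj pc F l h x hfin)[i]) =
      Ω ^ (Nv adj pc F l h x ((blkD adj pc F l h x hfin)[i]) + 1) *
        (((blkD adj pc F l h x hfin).length - i : ℕ) : Ordinal) := by
  classical
  set b := blkD adj pc F l h x hfin with hb
  have hmem : b[i] ∈ Dset adj pc F l h x := (blkD_mem adj pc F hfin _).mp (List.getElem_mem hi)
  rw [hD]
  rw [if_pos hmem]
  rw [List.Nodup.idxOf_getElem (blkD_nd adj pc F hfin) i hi]

/-- numeric helper : `a * k < ω ^ (e + 1)` when `a = ω ^ e`, `k < ω`. -/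
theorem hD_lt_pow {e : Ordinal.{u}} {k : ℕ} :
    Ω ^ (e + 1) * (k : Ordinal) < Ω ^ (e + 2) := by
  have h1 : Ω ^ (e + 1) * (k : Ordinal) < Ω ^ (e + 1) * Ω :=
    (mul_lt_mul_iff_right₀ (Ordinal.opow_pos _ Ordinal.omega0_pos)).mpr
      (Ordinal.nat_lt_omega0 k)
  have h2 : Ω ^ (e + 1) * Ω = Ω ^ (e + 2) := by
    have he : e + 2 = Order.succ (e + 1) := by
      rw [← Ordinal.add_one_eq_succ, add_assoc]
      norm_num
    rw [he, Ordinal.opow_succ]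
  exact h2 ▸ h1

theorem pow_le_hD {e : Ordinal.{u}} {k : ℕ} (hk : 1 ≤ k) :
    Ω ^ (e + 1) ≤ Ω ^ (e + 1) * (k : Ordinal) := by
  calc Ω ^ (e + 1) = Ω ^ (e + 1) * 1 := (mul_one _).symm
    _ ≤ Ω ^ (e + 1) * (k : Ordinal) := mul_le_mul_right (by exact_mod_cast hk) _

/-- The single-stage extension theorem. -/
theorem stage_ex
    (hUfin : ∀ v, {u | adj v u ∧ pc v u}.Finite)
    (hsym : ∀ u v, adj u v → adj v u)
    (hcomp : ∀ u v, adj u v → pc u v ∨ pc v u)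
    (hgap : ∀ v z, adj v z → pc z v → F z + 5 ≤ F v)
    (l : List V) (h : V → Ordinal.{u}) (x : V) (hnd : l.Nodup)
    (hI1 : ∀ i j (hi : i < l.length) (hj : j < l.length), i < j → adj (l[i]) (l[j]) →
      h (l[j]) < h (l[i]))
    (hI2 : ∀ d ∈ l, ∀ y, y ∉ l → adj d y → Ω ^ (F y + 4) ≤ h d) :
    ∃ (b : List V) (h' : V → Ordinal.{u}),
      (l ++ b).Nodup ∧ x ∈ l ++ b ∧ (∀ v ∈ l, h' v = h v) ∧
      (∀ i j (hi : i < (l ++ b).length) (hj : j < (l ++ b).length), i < j →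
        adj ((l ++ b)[i]) ((l ++ b)[j]) → h' ((l ++ b)[j]) < h' ((l ++ b)[i])) ∧
      (∀ d ∈ l ++ b, ∀ y, y ∉ l ++ b → adj d y → Ω ^ (F y + 4) ≤ h' d) := by
  classical
  by_cases hx : x ∈ l
  · refine ⟨[], h, by simpa using hnd, by simpa using hx, fun v _ => rfl, ?_, ?_⟩
    · intro i j hi hj hij hadj
      simp only [List.append_nil] at hi hj hadj ⊢
      exact hI1 i j hi hj hij hadj
    · intro d hd y hy hadj
      simp only [List.append_nil] at hd hy
      exact hI2 d hd y hy hadj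
  · have hfin : (Dset adj pc F l h x).Finite := Dset_finite adj pc F hUfin hsym hgap hI2 x
    set b := blkD adj pc F l h x hfin with hbdef
    set h' := hD adj pc F l h x hfin with hh'def
    have hbD : ∀ v, v ∈ b ↔ v ∈ Dset adj pc F l h x := blkD_mem adj pc F hfin
    have hbnotl : ∀ v ∈ b, v ∉ l := fun v hv =>
      Dset_not_mem_l adj pc F x hx v ((hbD v).mp hv)
    have hnd' : (l ++ b).Nodup := by
      rw [List.nodup_append]
      exact ⟨hnd, blkD_nd adj pc F hfin, fun a ha a' hb hab => (hbnotl a' hb) (hab ▸ ha)⟩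
    have hxmem : x ∈ l ++ b :=
      List.mem_append_right _ ((hbD x).mpr (mem_Dset_self adj pc F x))
    have hold : ∀ v ∈ l, h' v = h v := fun v hv => hD_old adj pc F hfin hx hv
    -- I1 for the new state
    have hI1' : ∀ i j (hi : i < (l ++ b).length) (hj : j < (l ++ b).length), i < j →
        adj ((l ++ b)[i]) ((l ++ b)[j]) → h' ((l ++ b)[j]) < h' ((l ++ b)[i]) := by
      intro i j hi hj hij hadj
      have hlen : (l ++ b).length = l.length + b.length := List.length_append
      rcases Nat.lt_or_ge j l.length with hjl | hjl
      · -- both old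
        have hil : i < l.length := by omega
        have e1 : (l ++ b)[i] = l[i] := List.getElem_append_left hil
        have e2 : (l ++ b)[j] = l[j] := List.getElem_append_left hjl
        rw [e1, e2] at hadj ⊢
        rw [hold _ (List.getElem_mem hil), hold _ (List.getElem_mem hjl)]
        exact hI1 i j hil hjl hij hadj
      · have hjb : j - l.length < b.length := by omega
        have e2 : (l ++ b)[j] = b[j - l.length] := List.getElem_append_right hjl
        have hzD : b[j - l.length] ∈ Dset adj pc F l h x :=
          (hbD _).mp (List.getElem_mem hjb)
        rcases Nat.lt_or_ge i l.length with hil | hil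
        · -- old-new
          have e1 : (l ++ b)[i] = l[i] := List.getElem_append_left hil
          rw [e1, e2] at hadj ⊢
          rw [hold _ (List.getElem_mem hil)]
          have hb1 : h' (b[j - l.length]) =
              Ω ^ (Nv adj pc F l h x (b[j - l.length]) + 1) *
                ((b.length - (j - l.length) : ℕ) : Ordinal) := hD_pos adj pc F hfin hjb
          have hlt : h' (b[j - l.length]) <
              Ω ^ (Nv adj pc F l h x (b[j - l.length]) + 2) := by
            rw [hb1]; exact hD_lt_pow
          refine lt_of_lt_of_le hlt ?_
          exact Nv_bound adj pc F hUfin hsym hcomp hgap hI2 hx hzD (l[i])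
            (List.getElem_mem hil) (hsym _ _ hadj)
        · -- new-new
          have hib : i - l.length < b.length := by omega
          have e1 : (l ++ b)[i] = b[i - l.length] := List.getElem_append_right hil
          rw [e1, e2] at hadj ⊢
          have hpij : i - l.length < j - l.length := by omega
          have hNle : Nv adj pc F l h x (b[j - l.length]) ≤
              Nv adj pc F l h x (b[i - l.length]) :=
            List.pairwise_iff_getElem.mp (blkD_sorted adj pc F hfin) _ _ hib hjb hpij
          have hvi : h' (b[i - l.length]) =
              Ω ^ (Nv adj pc F l h x (b[i - l.length]) + 1) *
                ((b.length - (i - l.length) : ℕ) : Ordinal) := hD_pos adj pc F hfin hib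
          have hvj : h' (b[j - l.length]) =
              Ω ^ (Nv adj pc F l h x (b[j - l.length]) + 1) *
                ((b.length - (j - l.length) : ℕ) : Ordinal) := hD_pos adj pc F hfin hjb
          rcases lt_or_eq_of_le hNle with hNlt | hNeq
          · rw [hvi, hvj]
            have h1 : Ω ^ (Nv adj pc F l h x (b[j - l.length]) + 1) *
                ((b.length - (j - l.length) : ℕ) : Ordinal) <
                Ω ^ (Nv adj pc F l h x (b[j - l.length]) + 2) := hD_lt_pow
            have h2 : Ω ^ (Nv adj pc F l h x (b[j - l.length]) + 2) ≤
                Ω ^ (Nv adj pc F l h x (b[i - l.length]) + 1) := by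
              apply (Ordinal.opow_le_opow_iff_right Ordinal.one_lt_omega0).mpr
              have := Order.add_one_le_iff.mpr hNlt
              calc Nv adj pc F l h x (b[j - l.length]) + 2
                  = (Nv adj pc F l h x (b[j - l.length]) + 1) + 1 := by
                    rw [add_assoc]; norm_num
                _ ≤ Nv adj pc F l h x (b[i - l.length]) + 1 := add_le_add_left this 1
            have h3 : Ω ^ (Nv adj pc F l h x (b[i - l.length]) + 1) ≤
                Ω ^ (Nv adj pc F l h x (b[i - l.length]) + 1) *
                  ((b.length - (i - l.length) : ℕ) : Ordinal) :=
              pow_le_hD (by omega)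
            exact lt_of_lt_of_le h1 (le_trans h2 h3)
          · rw [hvi, hvj, ← hNeq]
            apply (mul_lt_mul_iff_right₀
              (Ordinal.opow_pos _ Ordinal.omega0_pos)).mpr
            exact_mod_cast (by omega : b.length - (j - l.length) < b.length - (i - l.length))
    -- I2 for the new state
    have hI2' : ∀ d ∈ l ++ b, ∀ y, y ∉ l ++ b → adj d y → Ω ^ (F y + 4) ≤ h' d := by
      intro d hd y hy hadj
      have hyl : y ∉ l := fun hc => hy (List.mem_append_left _ hc)
      have hyb : y ∉ b := fun hc => hy (List.mem_append_right _ hc)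
      rcases List.mem_append.mp hd with hdl | hdb
      · rw [hold _ hdl]
        exact hI2 d hdl y hyl hadj
      · have hdD : d ∈ Dset adj pc F l h x := (hbD d).mp hdb
        have hyD : y ∉ Dset adj pc F l h x := fun hc => hyb ((hbD y).mpr hc)
        have hNge : F y + 3 ≤ Nv adj pc F l h x d := Nv_ge adj pc F hadj hyl hyD
        obtain ⟨i, hi, hrfl⟩ := List.mem_iff_getElem.mp hdb
        have hval : h' d = Ω ^ (Nv adj pc F l h x d + 1) *
            ((b.length - i : ℕ) : Ordinal) := by
          rw [← hrfl]; exact hD_pos adj pc F hfin hi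
        rw [hval]
        have h1 : Ω ^ (F y + 4) ≤ Ω ^ (Nv adj pc F l h x d + 1) := by
          apply (Ordinal.opow_le_opow_iff_right Ordinal.one_lt_omega0).mpr
          calc F y + 4 = (F y + 3) + 1 := by rw [add_assoc]; norm_num
            _ ≤ Nv adj pc F l h x d + 1 := add_le_add_left hNge 1
        exact le_trans h1 (pow_le_hD (by omega))
    exact ⟨b, h', hnd', hxmem, hold, hI1', hI2'⟩
structure GSt (adj : V → V → Prop) (F : V → Ordinal.{u}) where
  l : List V
  h : V → Ordinal.{u}
  nd : l.Nodup
  I1 : ∀ i j (hi : i < l.length) (hj : j < l.length), i < j → adj (l[i]) (l[j]) →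
    h (l[j]) < h (l[i])
  I2 : ∀ d ∈ l, ∀ y, y ∉ l → adj d y → Ω ^ (F y + 4) ≤ h d

variable (hUfin : ∀ v, {u | adj v u ∧ pc v u}.Finite)
variable (hsym : ∀ u v, adj u v → adj v u)
variable (hcomp : ∀ u v, adj u v → pc u v ∨ pc v u)
variable (hgap : ∀ v z, adj v z → pc z v → F z + 5 ≤ F v)

def gstep (hUfin : ∀ v, {u | adj v u ∧ pc v u}.Finite)
    (hsym : ∀ u v, adj u v → adj v u)
    (hcomp : ∀ u v, adj u v → pc u v ∨ pc v u)
    (hgap : ∀ v z, adj v z → pc z v → F z + 5 ≤ F v)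
    (s : GSt adj F) (x : V) : GSt adj F :=
  let spec1 := stage_ex adj pc F hUfin hsym hcomp hgap s.l s.h x s.nd s.I1 s.I2
  let b := Classical.choose spec1
  let spec2 := Classical.choose_spec spec1
  let h' := Classical.choose spec2
  let p := Classical.choose_spec spec2
  ⟨s.l ++ b, h', p.1, p.2.2.2.1, p.2.2.2.2⟩

theorem gstep_spec (s : GSt adj F) (x : V) :
    (∃ b, (gstep adj pc F hUfin hsym hcomp hgap s x).l = s.l ++ b) ∧
    x ∈ (gstep adj pc F hUfin hsym hcomp hgap s x).l ∧
    (∀ v ∈ s.l, (gstep adj pc F hUfin hsym hcomp hgap s x).h v = s.h v) := by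
  unfold gstep
  refine ⟨⟨_, rfl⟩, ?_, ?_⟩
  · exact (Classical.choose_spec (Classical.choose_spec
      (stage_ex adj pc F hUfin hsym hcomp hgap s.l s.h x s.nd s.I1 s.I2))).2.1
  · exact (Classical.choose_spec (Classical.choose_spec
      (stage_ex adj pc F hUfin hsym hcomp hgap s.l s.h x s.nd s.I1 s.I2))).2.2.1

def gchain (e : ℕ → V) : ℕ → GSt adj F
  | 0 => ⟨[], fun _ => 0, List.nodup_nil,
      fun i j hi _ _ _ => by simp at hi,
      fun d hd => by simp at hd⟩
  | (n+1) => gstep adj pc F hUfin hsym hcomp hgap (gchain e n) (e n)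

theorem gchain_pre (e : ℕ → V) (n : ℕ) :
    (gchain adj pc F hUfin hsym hcomp hgap e n).l <+:
      (gchain adj pc F hUfin hsym hcomp hgap e (n+1)).l := by
  obtain ⟨b, hb⟩ := (gstep_spec adj pc F hUfin hsym hcomp hgap
    (gchain adj pc F hUfin hsym hcomp hgap e n) (e n)).1
  exact ⟨b, hb.symm⟩

theorem gchain_mem (e : ℕ → V) (n : ℕ) :
    e n ∈ (gchain adj pc F hUfin hsym hcomp hgap e (n+1)).l :=
  (gstep_spec adj pc F hUfin hsym hcomp hgap _ (e n)).2.1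

theorem gchain_hstab (e : ℕ → V) : ∀ n m, n ≤ m →
    ∀ v ∈ (gchain adj pc F hUfin hsym hcomp hgap e n).l,
      (gchain adj pc F hUfin hsym hcomp hgap e m).h v =
        (gchain adj pc F hUfin hsym hcomp hgap e n).h v := by
  intro n m hnm
  induction m with
  | zero =>
    intro v hv
    rw [Nat.le_zero.mp hnm]
  | succ m ih =>
    intro v hv
    rcases Nat.lt_or_ge n (m+1) with h' | h'
    · have hnm' : n ≤ m := by omega
      have hvm : v ∈ (gchain adj pc F hUfin hsym hcomp hgap e m).l := by
        -- prefix monotone membership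
        have hpre : ∀ a b : ℕ, a ≤ b → (gchain adj pc F hUfin hsym hcomp hgap e a).l <+:
            (gchain adj pc F hUfin hsym hcomp hgap e b).l := by
          intro a b hab
          induction b with
          | zero => rw [Nat.le_zero.mp hab]
          | succ b ihb =>
            rcases Nat.lt_or_ge a (b+1) with h'' | h''
            · exact (ihb (by omega)).trans (gchain_pre adj pc F hUfin hsym hcomp hgap e b)
            · have : a = b + 1 := by omega
              rw [this]
        exact (hpre n m hnm').mem hv
      have h1 := (gstep_spec adj pc F hUfin hsym hcomp hgap
        (gchain adj pc F hUfin hsym hcomp hgap e m) (e m)).2.2 v hvm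
      rw [show gchain adj pc F hUfin hsym hcomp hgap e (m+1) =
        gstep adj pc F hUfin hsym hcomp hgap (gchain adj pc F hUfin hsym hcomp hgap e m) (e m)
        from rfl]
      rw [h1]
      exact ih hnm' v hv
    · have : n = m + 1 := by omega
      rw [this]




theorem partD_abstract [Infinite V] (e : ℕ → V) (hesurj : Function.Surjective e)
    (hUfin : ∀ v, {u | adj v u ∧ pc v u}.Finite)
    (hsym : ∀ u v, adj u v → adj v u)
    (hcomp : ∀ u v, adj u v → pc u v ∨ pc v u)
    (hgap : ∀ v z, adj v z → pc z v → F z + 5 ≤ F v) :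
    ∃ φ : V ≃ ℕ, ¬ ∃ w : ℕ → V, Function.Injective w ∧
      ∀ i, adj (w i) (w (i+1)) ∧ φ (w i) < φ (w (i+1)) := by
  classical
  set L : ℕ → List V := fun n => (gchain adj pc F hUfin hsym hcomp hgap e n).l with hLdef
  have hL : GoodChain L :=
    { pre := fun n => gchain_pre adj pc F hUfin hsym hcomp hgap e n
      nd := fun n => (gchain adj pc F hUfin hsym hcomp hgap e n).nd
      mem := fun v => by
        obtain ⟨m, rfl⟩ := hesurj v
        exact ⟨m+1, gchain_mem adj pc F hUfin hsym hcomp hgap e m⟩ }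
  set hfin : V → Ordinal.{u} := fun v =>
    (gchain adj pc F hUfin hsym hcomp hgap e (Nat.find (hL.mem v))).h v with hfindef
  have hfin_eq : ∀ n v, v ∈ L n →
      (gchain adj pc F hUfin hsym hcomp hgap e n).h v = hfin v := by
    intro n v hv
    have h1 : Nat.find (hL.mem v) ≤ n := Nat.find_min' _ hv
    exact gchain_hstab adj pc F hUfin hsym hcomp hgap e (Nat.find (hL.mem v)) n h1 v
      (Nat.find_spec (hL.mem v))
  have hcert : ∀ a b, a < b → (adj (enumF hL a) (enumF hL b) →
      hfin (enumF hL b) < hfin (enumF hL a)) := by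
    refine enumF_rel hL (fun u v => adj u v → hfin v < hfin u) ?_
    intro n i j hi hj hij hadj
    have hIJ := (gchain adj pc F hUfin hsym hcomp hgap e n).I1 i j hi hj hij hadj
    rw [hfin_eq n _ (List.getElem_mem hi), hfin_eq n _ (List.getElem_mem hj)] at hIJ
    exact hIJ
  refine ⟨enumEquiv hL, ?_⟩
  rintro ⟨w, hwinj, hw⟩
  have hdesc : ∀ i, hfin (w (i+1)) < hfin (w i) := by
    intro i
    have h1 : (enumEquiv hL) (w i) < (enumEquiv hL) (w (i+1)) := (hw i).2
    have h2 := hcert _ _ h1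
    rw [enumF_enumEquiv hL, enumF_enumEquiv hL] at h2
    exact h2 (hw i).1
  obtain ⟨o, ho, hmin⟩ := Ordinal.lt_wf.has_min (Set.range fun i => hfin (w i)) ⟨_, 0, rfl⟩
  obtain ⟨i, rfl⟩ := ho
  exact hmin _ ⟨i+1, rfl⟩ (hdesc i)


end Stage

theorem partD {V : Type u} [Countable V] [Infinite V] (G : SimpleGraph V)
    (hW : ¬ ∃ W : Set V, W.Nonempty ∧ ∀ v ∈ W, {u | u ∈ W ∧ G.Adj v u}.Infinite) :
    ∃ φ : V ≃ ℕ, ¬ InfIncrPath G (fun v => φ v) := by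
  classical
  obtain ⟨ι, hι⟩ := (countable_iff_exists_injective V).mp inferInstance
  obtain ⟨e'⟩ : Nonempty (V ≃ ℕ) := nonempty_equiv_of_countable
  have hUfin : ∀ v, {u | G.Adj v u ∧ prec (rnk G) ι v u}.Finite := fun v =>
    (upSet_finite G hW v).subset (fun u hu => ⟨hu.1, prec_rnk_le (rnk G) ι hu.2⟩)
  have hcomp : ∀ u v, G.Adj u v → prec (rnk G) ι u v ∨ prec (rnk G) ι v u := fun u v h =>
    prec_comparable (rnk G) ι hι (G.ne_of_adj h)
  obtain ⟨φ, hφ⟩ := partD_abstract G.Adj (prec (rnk G) ι) (Phi G (rnk G) ι)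
    (fun n => e'.symm n) e'.symm.surjective hUfin (fun u v h => h.symm) hcomp
    (fun v z h1 h2 => Phi_gap G (rnk G) ι h1 h2)
  exact ⟨φ, hφ⟩

end Stmt8Aux
end

theorem stmt8 {V : Type*} [Countable V] [Infinite V] (G : SimpleGraph V) :
    FIN G ↔ ((∀ k : ℕ, ¬ HasChiStarPartition G k) ∧
      ¬ ∃ W : Set V, W.Nonempty ∧ ∀ v ∈ W, {u | u ∈ W ∧ G.Adj v u}.Infinite) := by
  constructor
  · rintro ⟨h1, h2⟩
    constructor
    · intro k hk
      obtain ⟨φ, m, hno⟩ := Stmt8Aux.partA G k hk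
      exact hno (h1 φ m)
    · rintro ⟨W, hWne, hWinf⟩
      obtain ⟨φ, hφ⟩ := h2
      exact hφ (Stmt8Aux.partC G W hWne hWinf (fun v => φ v)
        (fun a b hab => φ.injective hab))
  · rintro ⟨h1, h2⟩
    constructor
    · intro φ k
      by_contra hk
      obtain ⟨m, hm⟩ := Stmt8Aux.partB G φ k hk
      exact h1 m hm
    · exact Stmt8Aux.partD G h2
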